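/- Let g ≥ 1 be an integer and B a symmetric g×g complex matrix whose imaginary part is positive definite. Then for every compact set K ⊆ ℂ^g there exists a summable family (c_n)_{n∈ℤ^g} of nonnegative reals such that |exp(iπ(n·Bn + 2 n·z))| ≤ c_n for all z ∈ K and all n ∈ ℤ^g; i.e., the theta series converges absolutely and uniformly on compact subsets of ℂ^g. -/

import Mathlib

open Complex

/-- The general term of the multidimensional theta series. -/
noncomputable def thetaTerm (g : ℕ) (B : Matrix (Fin g) (Fin g) ℂ)
    (z : Fin g → ℂ) (n : Fin g → ℤ) : ℂ :=
  Complex.exp ((Real.pi : ℂ) * Complex.I *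
    ((∑ i, (n i : ℂ) * ∑ j, B i j * (n j : ℂ)) + 2 * ∑ i, (n i : ℂ) * z i))

/-- Summability, over `Fin g → ℤ`, of products of a summable nonnegative family. -/
lemma summable_pi_prod {g : ℕ} {f : ℤ → ℝ} (h0 : ∀ n, 0 ≤ f n) (hf : Summable f) :
    Summable fun n : Fin g → ℤ => ∏ i, f (n i) := by
  induction g with
  | zero => exact Summable.of_finite
  | succ g ih =>
    have h1 : (0 : ℤ → ℝ) ≤ f := h0
    have h2 : (0 : (Fin g → ℤ) → ℝ) ≤ fun n => ∏ i, f (n i) :=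
      fun n => Finset.prod_nonneg fun i _ => h0 _
    have h : Summable fun p : ℤ × (Fin g → ℤ) => f p.1 * ∏ i, f (p.2 i) :=
      Summable.mul_of_nonneg (f := f) (g := fun n : Fin g → ℤ => ∏ i, f (n i)) hf ih h1 h2
    have h2 : Summable
        ((fun n : Fin (g + 1) → ℤ => ∏ i, f (n i)) ∘ ⇑(Fin.consEquiv fun _ => ℤ)) := by
      simpa [Function.comp_def, Fin.prod_univ_succ, Fin.consEquiv] using h
    exact (Equiv.summable_iff _).mp h2

/-- A positive definite real matrix dominates a positive multiple of the standard
quadratic form. -/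
lemma posdef_lower_bound {g : ℕ} (hg : 1 ≤ g) (Y : Matrix (Fin g) (Fin g) ℝ)
    (hY : Y.PosDef) :
    ∃ lam > 0, ∀ x : Fin g → ℝ, lam * ∑ i, x i ^ 2 ≤ ∑ i, x i * ∑ j, Y i j * x j := by
  haveI : NeZero g := ⟨by omega⟩
  set f : (Fin g → ℝ) → ℝ := fun x => ∑ i, x i * ∑ j, Y i j * x j with hf
  have hcont : Continuous f := by
    apply continuous_finset_sum
    intro i _
    exact (continuous_apply i).mul
      (continuous_finset_sum _ fun j _ => continuous_const.mul (continuous_apply j))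
  have hpos : ∀ x : Fin g → ℝ, x ≠ 0 → 0 < f x := by
    intro x hx
    have h := (Matrix.posDef_iff_dotProduct_mulVec.mp hY).2 hx
    have hform : f x = dotProduct x (Y.mulVec x) := by
      simp [hf, Matrix.mulVec, dotProduct]
    rw [hform]
    simpa using h
  have hcs : IsCompact (Metric.sphere (0 : Fin g → ℝ) 1) := isCompact_sphere 0 1
  have hne : (Metric.sphere (0 : Fin g → ℝ) 1).Nonempty := by
    refine ⟨fun _ => 1, ?_⟩
    simp [mem_sphere_iff_norm]
  obtain ⟨u, hu, hmin⟩ := hcs.exists_isMinOn hne hcont.continuousOn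
  have hu1 : ‖u‖ = 1 := by simpa [mem_sphere_iff_norm] using hu
  have hu0 : u ≠ 0 := by
    intro h; rw [h] at hu1; simp at hu1
  set lam := f u with hlam
  have hlampos : 0 < lam := hpos u hu0
  refine ⟨lam / g, by positivity, fun x => ?_⟩
  rcases eq_or_ne x 0 with rfl | hx
  · simp [hf]
  · set r : ℝ := ‖x‖ with hr
    have hrpos : 0 < r := norm_pos_iff.mpr hx
    have hrne : r ≠ 0 := hrpos.ne'
    have hsphere : r⁻¹ • x ∈ Metric.sphere (0 : Fin g → ℝ) 1 := by
      rw [mem_sphere_iff_norm, sub_zero, norm_smul, norm_inv, Real.norm_eq_abs,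
        abs_of_pos hrpos]
      exact inv_mul_cancel₀ hrne
    have inner : ∀ i, ∑ j, Y i j * (r⁻¹ * x j) = r⁻¹ * ∑ j, Y i j * x j := by
      intro i; rw [Finset.mul_sum]; exact Finset.sum_congr rfl fun j _ => by ring
    have hscale : f x = r ^ 2 * f (r⁻¹ • x) := by
      simp only [hf, Pi.smul_apply, smul_eq_mul, inner]
      rw [Finset.mul_sum]
      refine Finset.sum_congr rfl fun i _ => ?_
      field_simp
    have hfx : lam * r ^ 2 ≤ f x := by
      rw [hscale]
      have h2 : lam ≤ f (r⁻¹ • x) := hmin hsphere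
      nlinarith [sq_nonneg r]
    have hsum : ∑ i, x i ^ 2 ≤ g * r ^ 2 := by
      have hb : ∀ i, x i ^ 2 ≤ r ^ 2 := by
        intro i
        have h1 : |x i| ≤ r := by
          simpa [Real.norm_eq_abs] using norm_le_pi_norm x i
        nlinarith [abs_nonneg (x i), _root_.sq_abs (x i)]
      calc ∑ i, x i ^ 2 ≤ ∑ _i : Fin g, r ^ 2 := Finset.sum_le_sum fun i _ => hb i
        _ = g * r ^ 2 := by simp [Finset.sum_const]
    have hg0 : (0:ℝ) < g := by positivity
    have hgne : (g:ℝ) ≠ 0 := hg0.ne'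
    calc lam / g * ∑ i, x i ^ 2 ≤ lam / g * (g * r ^ 2) := by
          apply mul_le_mul_of_nonneg_left hsum (by positivity)
      _ = lam * r ^ 2 := by field_simp
      _ ≤ f x := hfx

/-- the theta series converges absolutely and uniformly on compact subsets
of `ℂ^g`: for every compact `K ⊆ ℂ^g` there is a summable family of nonnegative reals
dominating the terms of the series uniformly over `K`. -/
theorem theta_series_uniform_summable_on_compacts (g : ℕ) (hg : 1 ≤ g)
    (B : Matrix (Fin g) (Fin g) ℂ) (hB : B.IsSymm)
    (hBim : (Matrix.of fun i j => (B i j).im).PosDef)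
    (K : Set (Fin g → ℂ)) (hK : IsCompact K) :
    ∃ c : (Fin g → ℤ) → ℝ, Summable c ∧ (∀ n, 0 ≤ c n) ∧
      ∀ z ∈ K, ∀ n : Fin g → ℤ, ‖thetaTerm g B z n‖ ≤ c n := by
  obtain ⟨lam, hlam, hQ⟩ := posdef_lower_bound hg _ hBim
  obtain ⟨C, hC⟩ := hK.isBounded.exists_norm_le
  refine ⟨fun n => ∏ i, Real.exp (-Real.pi * (lam * (n i : ℝ) ^ 2 - 2 * C * |(n i : ℝ)|)),
    ?_, ?_, ?_⟩
  · have h := summable_pow_mul_jacobiTheta₂_term_bound C hlam 0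
    have h' : Summable fun m : ℤ =>
        Real.exp (-Real.pi * (lam * (m : ℝ) ^ 2 - 2 * C * |(m : ℝ)|)) := by
      simpa using h
    exact summable_pi_prod
      (f := fun m : ℤ => Real.exp (-Real.pi * (lam * (m : ℝ) ^ 2 - 2 * C * |(m : ℝ)|)))
      (fun m => (Real.exp_pos _).le) h'
  · intro n
    exact Finset.prod_nonneg fun i _ => (Real.exp_pos _).le
  · intro z hz n
    have hnorm : ‖thetaTerm g B z n‖ =
        Real.exp (((Real.pi : ℂ) * Complex.I *
          ((∑ i, (n i : ℂ) * ∑ j, B i j * (n j : ℂ)) + 2 * ∑ i, (n i : ℂ) * z i)).re) := by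
      rw [thetaTerm, Complex.norm_exp]
    have hre : ((Real.pi : ℂ) * Complex.I *
          ((∑ i, (n i : ℂ) * ∑ j, B i j * (n j : ℂ)) + 2 * ∑ i, (n i : ℂ) * z i)).re =
        -Real.pi * ((∑ i, (n i : ℝ) * ∑ j, (B i j).im * (n j : ℝ))
          + 2 * ∑ i, (n i : ℝ) * (z i).im) := by
      simp [Complex.mul_re, Complex.mul_im, Complex.im_sum, Complex.re_sum, Finset.mul_sum]
    rw [hnorm, hre]
    beta_reduce
    rw [← Real.exp_sum]
    apply Real.exp_le_exp.mpr
    -- rewrite the sum on the right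
    have hsum_eq : ∑ i, -Real.pi * (lam * (n i : ℝ) ^ 2 - 2 * C * |(n i : ℝ)|) =
        -Real.pi * (lam * ∑ i, (n i : ℝ) ^ 2 - 2 * C * ∑ i, |(n i : ℝ)|) := by
      simp only [mul_sub, Finset.sum_sub_distrib, ← mul_assoc, Finset.mul_sum]
    rw [hsum_eq]
    -- the quadratic part
    have hQn : lam * ∑ i, (n i : ℝ) ^ 2 ≤
        ∑ i, (n i : ℝ) * ∑ j, (B i j).im * (n j : ℝ) := by
      simpa using hQ fun i => (n i : ℝ)
    -- the linear part
    have hzC : ∀ i, |(z i).im| ≤ C := by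
      intro i
      calc |(z i).im| ≤ ‖z i‖ := Complex.abs_im_le_norm _
        _ = ‖z i‖ := rfl
        _ ≤ ‖z‖ := norm_le_pi_norm z i
        _ ≤ C := hC z hz
    have hL : |∑ i, (n i : ℝ) * (z i).im| ≤ C * ∑ i, |(n i : ℝ)| := by
      calc |∑ i, (n i : ℝ) * (z i).im| ≤ ∑ i, |(n i : ℝ) * (z i).im| :=
            Finset.abs_sum_le_sum_abs _ _
        _ ≤ ∑ i, |(n i : ℝ)| * C := by
            refine Finset.sum_le_sum fun i _ => ?_
            rw [abs_mul]
            exact mul_le_mul_of_nonneg_left (hzC i) (abs_nonneg _)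
        _ = C * ∑ i, |(n i : ℝ)| := by rw [← Finset.sum_mul, mul_comm]
    have habs := abs_le.mp hL
    nlinarith [Real.pi_pos, hQn, habs.1, habs.2]
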